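/- For every q ∈ Q_Q(ℝⁿ) with card(spt(q)) ≥ 2, there exist an integer L with 1 ≤ L ≤ Q−1, members q^{(0)} = q, q^{(1)},...,q^{(L)} ∈ Q_Q(ℝⁿ), and numbers 0 = ρ₀ < σ₀ < ρ₁ < σ₁ < ⋯ < ρ_L such that: (b) spt(q^{(k−1)}) ⊋ spt(q^{(k)}) for each k and spt(q^{(L)}) is a single point; (c) 10Q·ρ_k ≤ σ_k for k < L, where σ_k = (sin θ₀/4)·min over distinct support points of q^{(k)} of their mutual distance; (d) σ_{k−1} < ρ_k ≤ C₀(n,Q)·σ_{k−1} for some constant C₀(n,Q) = [1+2K(Q−1)²]^{Q−1} with K = 20Q/sin θ₀; (e) B^Q_{σ_{k−1}}(q^{(k−1)}) ⊆ B^Q_{ρ_k}(q^{(k)}); and (f) G(q^{(0)}, q^{(k)}) < (Q−1)·ρ_k. -/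

import Mathlib

open Finset
open scoped Classical

/-- The Almgren metric on unordered `Q`-tuples in `ℝⁿ`. -/
noncomputable def Gdist {n Q : ℕ} (p q : Fin Q → EuclideanSpace ℝ (Fin n)) : ℝ :=
  Finset.univ.inf' Finset.univ_nonempty
    (fun σ : Equiv.Perm (Fin Q) => Real.sqrt (∑ i, ‖p i - q (σ i)‖ ^ 2))

namespace Stmt11

variable {n Q : ℕ}

lemma gdist_le (p q : Fin Q → EuclideanSpace ℝ (Fin n)) (σ : Equiv.Perm (Fin Q)) :
    Gdist p q ≤ Real.sqrt (∑ i, ‖p i - q (σ i)‖ ^ 2) :=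
  Finset.inf'_le _ (Finset.mem_univ σ)

lemma minkowski (f g : Fin Q → EuclideanSpace ℝ (Fin n)) :
    Real.sqrt (∑ i, ‖f i + g i‖ ^ 2) ≤
      Real.sqrt (∑ i, ‖f i‖ ^ 2) + Real.sqrt (∑ i, ‖g i‖ ^ 2) := by
  let F : PiLp 2 (fun _ : Fin Q => EuclideanSpace ℝ (Fin n)) := WithLp.toLp 2 f
  let G' : PiLp 2 (fun _ : Fin Q => EuclideanSpace ℝ (Fin n)) := WithLp.toLp 2 g
  have h1 : Real.sqrt (∑ i, ‖f i + g i‖ ^ 2) = ‖F + G'‖ := by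
    rw [PiLp.norm_eq_of_L2]; rfl
  have h2 : Real.sqrt (∑ i, ‖f i‖ ^ 2) = ‖F‖ := (PiLp.norm_eq_of_L2 F).symm
  have h3 : Real.sqrt (∑ i, ‖g i‖ ^ 2) = ‖G'‖ := (PiLp.norm_eq_of_L2 G').symm
  rw [h1, h2, h3]
  exact norm_add_le F G'

lemma gdist_triangle (p q r : Fin Q → EuclideanSpace ℝ (Fin n)) :
    Gdist p r ≤ Gdist p q + Gdist q r := by
  obtain ⟨σ, -, hσ⟩ := Finset.exists_mem_eq_inf' (Finset.univ_nonempty)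
    (fun σ : Equiv.Perm (Fin Q) => Real.sqrt (∑ i, ‖p i - q (σ i)‖ ^ 2))
  obtain ⟨τ, -, hτ⟩ := Finset.exists_mem_eq_inf' (Finset.univ_nonempty)
    (fun τ : Equiv.Perm (Fin Q) => Real.sqrt (∑ i, ‖q i - r (τ i)‖ ^ 2))
  have h0 : Gdist p r ≤ Real.sqrt (∑ i, ‖p i - r ((σ.trans τ) i)‖ ^ 2) := gdist_le p r _
  have key : Real.sqrt (∑ i, ‖p i - r ((σ.trans τ) i)‖ ^ 2) ≤
      Real.sqrt (∑ i, ‖p i - q (σ i)‖ ^ 2) + Real.sqrt (∑ i, ‖q (σ i) - r (τ (σ i))‖ ^ 2) := by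
    have := minkowski (n := n) (fun i => p i - q (σ i)) (fun i => q (σ i) - r (τ (σ i)))
    simpa using this
  have hre : ∑ i, ‖q (σ i) - r (τ (σ i))‖ ^ 2 = ∑ i, ‖q i - r (τ i)‖ ^ 2 :=
    Equiv.sum_comp σ (fun i => ‖q i - r (τ i)‖ ^ 2)
  rw [hre] at key
  calc Gdist p r ≤ _ := h0
    _ ≤ _ := key
    _ = Gdist p q + Gdist q r := by rw [Gdist, Gdist, ← hσ, ← hτ]

lemma gdist_nonneg (p q : Fin Q → EuclideanSpace ℝ (Fin n)) : 0 ≤ Gdist p q := by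
  apply Finset.le_inf'
  intro σ _
  exact Real.sqrt_nonneg _

/-! ### graphs at scale t -/

def graphAt (q' : Fin Q → EuclideanSpace ℝ (Fin n)) (t : ℝ) : SimpleGraph (Fin Q) where
  Adj i j := i ≠ j ∧ ‖q' i - q' j‖ ≤ t
  symm := by
    constructor
    rintro i j ⟨h1, h2⟩
    exact ⟨h1.symm, by rwa [norm_sub_rev]⟩
  loopless := ⟨fun i h => h.1 rfl⟩

noncomputable def rep (q' : Fin Q → EuclideanSpace ℝ (Fin n)) (t : ℝ) (i : Fin Q) : Fin Q :=
  ((graphAt q' t).connectedComponentMk i).out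

lemma reach_rep (q' : Fin Q → EuclideanSpace ℝ (Fin n)) (t : ℝ) (i : Fin Q) :
    (graphAt q' t).Reachable i (rep q' t i) := by
  have : (graphAt q' t).connectedComponentMk (rep q' t i)
      = (graphAt q' t).connectedComponentMk i := Quot.out_eq _
  exact ((SimpleGraph.ConnectedComponent.eq).1 this).symm

lemma rep_eq_of_reach {q' : Fin Q → EuclideanSpace ℝ (Fin n)} {t : ℝ} {i j : Fin Q}
    (h : (graphAt q' t).Reachable i j) : rep q' t i = rep q' t j := by
  unfold rep
  rw [SimpleGraph.ConnectedComponent.eq.2 h]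

lemma reach_of_rep_eq {q' : Fin Q → EuclideanSpace ℝ (Fin n)} {t : ℝ} {i j : Fin Q}
    (h : rep q' t i = rep q' t j) : (graphAt q' t).Reachable i j := by
  have h1 := reach_rep q' t i
  have h2 := reach_rep q' t j
  rw [h] at h1
  exact h1.trans h2.symm

lemma reach_of_eq {q' : Fin Q → EuclideanSpace ℝ (Fin n)} {t : ℝ} (ht : 0 ≤ t) {i j : Fin Q}
    (h : q' i = q' j) : (graphAt q' t).Reachable i j := by
  by_cases hij : i = j
  · exact hij ▸ SimpleGraph.Reachable.refl i
  · exact SimpleGraph.Adj.reachable ⟨hij, by rw [h]; simpa using ht⟩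

lemma reach_mono {q' : Fin Q → EuclideanSpace ℝ (Fin n)} {t t' : ℝ} (h : t ≤ t') {i j : Fin Q}
    (hr : (graphAt q' t).Reachable i j) : (graphAt q' t').Reachable i j := by
  refine hr.mono ?_
  rintro a b ⟨h1, h2⟩
  exact ⟨h1, h2.trans h⟩

lemma reach_eq_of_neg {q' : Fin Q → EuclideanSpace ℝ (Fin n)} {t : ℝ} (ht : t < 0) {i j : Fin Q}
    (hr : (graphAt q' t).Reachable i j) : i = j := by
  obtain ⟨w⟩ := hr
  cases w with
  | nil => rfl
  | @cons _ b _ h p =>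
    exfalso
    have h2 := h.2
    have h0 : (0:ℝ) ≤ ‖q' i - q' b‖ := norm_nonneg _
    linarith

lemma rep_neg (q' : Fin Q → EuclideanSpace ℝ (Fin n)) {t : ℝ} (ht : t < 0) (i : Fin Q) :
    rep q' t i = i :=
  reach_eq_of_neg ht (reach_rep q' t i).symm

lemma walk_norm_le {q' : Fin Q → EuclideanSpace ℝ (Fin n)} {t : ℝ} (ht : 0 ≤ t) {i j : Fin Q}
    (w : (graphAt q' t).Walk i j) : ‖q' i - q' j‖ ≤ w.length * t := by
  induction w with
  | nil => simp
  | @cons a b c h p ih =>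
    have h1 : ‖q' a - q' c‖ ≤ ‖q' a - q' b‖ + ‖q' b - q' c‖ :=
      norm_sub_le_norm_sub_add_norm_sub _ _ _
    have h2 : ‖q' a - q' b‖ ≤ t := h.2
    have hl : ((SimpleGraph.Walk.cons h p).length : ℝ) = p.length + 1 := by
      simp [SimpleGraph.Walk.length_cons]
    rw [hl]
    nlinarith [ih]

lemma reach_norm_le {q' : Fin Q → EuclideanSpace ℝ (Fin n)} {t : ℝ} (ht : 0 ≤ t) {i j : Fin Q}
    (hr : (graphAt q' t).Reachable i j) : ‖q' i - q' j‖ ≤ ((Q:ℝ) - 1) * t := by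
  obtain ⟨w⟩ := hr
  have hp := w.toPath.2.length_lt
  have hwl := walk_norm_le ht (w.toPath.1 : (graphAt q' t).Walk i j)
  have hcard : Fintype.card (Fin Q) = Q := Fintype.card_fin Q
  rw [hcard] at hp
  have hQ1 : ((w.toPath.1.length : ℝ)) ≤ (Q:ℝ) - 1 := by
    have h' : (w.toPath.1.length : ℕ) + 1 ≤ Q := hp
    have h'' : ((w.toPath.1.length + 1 : ℕ) : ℝ) ≤ (Q : ℝ) := Nat.cast_le.2 h'
    push_cast at h''
    linarith
  calc ‖q' i - q' j‖ ≤ w.toPath.1.length * t := hwl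
    _ ≤ ((Q:ℝ) - 1) * t := by
      apply mul_le_mul_of_nonneg_right hQ1 ht

/-! ### clustering values -/

noncomputable def vals (q' : Fin Q → EuclideanSpace ℝ (Fin n)) (t : ℝ) :
    Finset (EuclideanSpace ℝ (Fin n)) :=
  Finset.univ.image (fun i => q' (rep q' t i))

lemma mem_vals {q' : Fin Q → EuclideanSpace ℝ (Fin n)} {t : ℝ} {v : EuclideanSpace ℝ (Fin n)} :
    v ∈ vals q' t ↔ ∃ i, q' (rep q' t i) = v := by simp [vals]

lemma vals_neg (q' : Fin Q → EuclideanSpace ℝ (Fin n)) {t : ℝ} (ht : t < 0) :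
    vals q' t = Finset.univ.image q' := by
  apply Finset.image_congr
  intro i _
  show q' (rep q' t i) = q' i
  rw [rep_neg q' ht i]

noncomputable def pick (q' : Fin Q → EuclideanSpace ℝ (Fin n)) (t : ℝ)
    {v : EuclideanSpace ℝ (Fin n)} (h : v ∈ vals q' t) : Fin Q :=
  (mem_vals.1 h).choose

lemma pick_spec (q' : Fin Q → EuclideanSpace ℝ (Fin n)) (t : ℝ)
    {v : EuclideanSpace ℝ (Fin n)} (h : v ∈ vals q' t) :
    q' (rep q' t (pick q' t h)) = v :=
  (mem_vals.1 h).choose_spec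

section counting

variable {q' : Fin Q → EuclideanSpace ℝ (Fin n)} {t t' : ℝ}

lemma key_step (ht' : 0 ≤ t')
    (himp : ∀ i j, (graphAt q' t).Reachable i j → (graphAt q' t').Reachable i j)
    {i₀ i₁ : Fin Q} (h : q' (rep q' t i₁) = q' (rep q' t i₀)) :
    rep q' t' i₁ = rep q' t' i₀ := by
  apply rep_eq_of_reach
  have h1 : (graphAt q' t').Reachable i₁ (rep q' t i₁) := himp _ _ (reach_rep q' t i₁)
  have h2 : (graphAt q' t').Reachable (rep q' t i₁) (rep q' t i₀) := reach_of_eq ht' h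
  have h3 : (graphAt q' t').Reachable (rep q' t i₀) i₀ := (himp _ _ (reach_rep q' t i₀)).symm
  exact (h1.trans h2).trans h3

noncomputable def Fmap (q' : Fin Q → EuclideanSpace ℝ (Fin n)) (t t' : ℝ)
    (v : {x // x ∈ vals q' t}) : {x // x ∈ vals q' t'} :=
  ⟨q' (rep q' t' (pick q' t v.2)), mem_vals.2 ⟨_, rfl⟩⟩

lemma Fmap_surj (ht' : 0 ≤ t')
    (himp : ∀ i j, (graphAt q' t).Reachable i j → (graphAt q' t').Reachable i j) :
    Function.Surjective (Fmap q' t t') := by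
  rintro ⟨w, hw⟩
  set i₀ := pick q' t' hw with hi₀
  refine ⟨⟨q' (rep q' t i₀), mem_vals.2 ⟨_, rfl⟩⟩, ?_⟩
  apply Subtype.ext
  show q' (rep q' t' (pick q' t _)) = w
  have hspec : q' (rep q' t (pick q' t (mem_vals.2 ⟨i₀, rfl⟩))) = q' (rep q' t i₀) :=
    pick_spec q' t _
  have := key_step ht' himp hspec
  rw [this]
  exact pick_spec q' t' hw

lemma card_vals_le (ht' : 0 ≤ t')
    (himp : ∀ i j, (graphAt q' t).Reachable i j → (graphAt q' t').Reachable i j) :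
    (vals q' t').card ≤ (vals q' t).card := by
  have := Fintype.card_le_of_surjective _ (Fmap_surj ht' himp)
  simpa [Fintype.card_coe] using this

lemma card_vals_lt (ht' : 0 ≤ t')
    (himp : ∀ i j, (graphAt q' t).Reachable i j → (graphAt q' t').Reachable i j)
    (hpair : ∃ i j, (graphAt q' t').Reachable i j ∧ q' (rep q' t i) ≠ q' (rep q' t j)) :
    (vals q' t').card < (vals q' t).card := by
  obtain ⟨i, j, hr, hne⟩ := hpair
  have hninj : ¬ Function.Injective (Fmap q' t t') := by
    intro hinj
    apply hne
    have hv₁ : q' (rep q' t i) ∈ vals q' t := mem_vals.2 ⟨_, rfl⟩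
    have hv₂ : q' (rep q' t j) ∈ vals q' t := mem_vals.2 ⟨_, rfl⟩
    have heq : Fmap q' t t' ⟨_, hv₁⟩ = Fmap q' t t' ⟨_, hv₂⟩ := by
      apply Subtype.ext
      show q' (rep q' t' (pick q' t hv₁)) = q' (rep q' t' (pick q' t hv₂))
      have e₁ := key_step ht' himp (pick_spec q' t hv₁)
      have e₂ := key_step ht' himp (pick_spec q' t hv₂)
      rw [e₁, e₂, rep_eq_of_reach hr]
    have := hinj heq
    exact congrArg Subtype.val this
  have := Fintype.card_lt_of_surjective_not_injective _ (Fmap_surj ht' himp) hninj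
  simpa [Fintype.card_coe] using this

end counting

/-! ### minimal separation -/

def dminSet (q : Fin Q → EuclideanSpace ℝ (Fin n)) : Set ℝ :=
  {d : ℝ | ∃ x ∈ Set.range q, ∃ y ∈ Set.range q, x ≠ y ∧ d = ‖x - y‖}

noncomputable def dmin (q : Fin Q → EuclideanSpace ℝ (Fin n)) : ℝ := sInf (dminSet q)

lemma dminSet_finite (q : Fin Q → EuclideanSpace ℝ (Fin n)) : (dminSet q).Finite := by
  have h : dminSet q ⊆ Set.image2 (fun x y => ‖x - y‖) (Set.range q) (Set.range q) := by
    rintro d ⟨x, hx, y, hy, -, rfl⟩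
    exact Set.mem_image2_of_mem hx hy
  exact ((Set.finite_range q).image2 _ (Set.finite_range q)).subset h

lemma dminSet_nonempty {q : Fin Q → EuclideanSpace ℝ (Fin n)}
    (h : 2 ≤ (Finset.univ.image q).card) : (dminSet q).Nonempty := by
  obtain ⟨a, ha, b, hb, hab⟩ := Finset.one_lt_card.1 h
  obtain ⟨i, -, rfl⟩ := Finset.mem_image.1 ha
  obtain ⟨j, -, rfl⟩ := Finset.mem_image.1 hb
  exact ⟨‖q i - q j‖, q i, ⟨i, rfl⟩, q j, ⟨j, rfl⟩, hab, rfl⟩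

lemma dmin_mem {q : Fin Q → EuclideanSpace ℝ (Fin n)}
    (h : 2 ≤ (Finset.univ.image q).card) : dmin q ∈ dminSet q :=
  (dminSet_nonempty h).csInf_mem (dminSet_finite q)

lemma dmin_pos {q : Fin Q → EuclideanSpace ℝ (Fin n)}
    (h : 2 ≤ (Finset.univ.image q).card) : 0 < dmin q := by
  obtain ⟨x, -, y, -, hxy, he⟩ := dmin_mem h
  rw [he]
  exact norm_sub_pos_iff.2 hxy

lemma dmin_pair {q : Fin Q → EuclideanSpace ℝ (Fin n)}
    (h : 2 ≤ (Finset.univ.image q).card) :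
    ∃ i j : Fin Q, q i ≠ q j ∧ ‖q i - q j‖ = dmin q := by
  obtain ⟨x, ⟨i, rfl⟩, y, ⟨j, rfl⟩, hxy, he⟩ := dmin_mem h
  exact ⟨i, j, hxy, he.symm⟩

lemma le_dmin {q : Fin Q → EuclideanSpace ℝ (Fin n)} {t : ℝ}
    (hne : (dminSet q).Nonempty) (h : ∀ i j : Fin Q, q i ≠ q j → t ≤ ‖q i - q j‖) :
    t ≤ dmin q := by
  apply le_csInf hne
  rintro d ⟨x, ⟨i, rfl⟩, y, ⟨j, rfl⟩, hxy, rfl⟩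
  exact h i j hxy

lemma s5lemma (hQ : 2 ≤ Q) :
    (1 + Real.sqrt Q * ((Q:ℝ) - 1)) ^ (Q - 1)
      ≤ 10 * (Q:ℝ) * ((((Q:ℝ) - 1) ^ 2) ^ (Q - 1)) := by
  rcases Nat.lt_or_ge Q 4 with h4 | h4
  · interval_cases Q
    · have h2 : Real.sqrt 2 ≤ 2 := by
        nlinarith [Real.sq_sqrt (show (0:ℝ) ≤ 2 by norm_num), Real.sqrt_nonneg 2]
      norm_num
      nlinarith [h2]
    · have h3 : Real.sqrt 3 ≤ 2 := by
        nlinarith [Real.sq_sqrt (show (0:ℝ) ≤ 3 by norm_num), Real.sqrt_nonneg 3]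
      norm_num
      nlinarith [h3, Real.sqrt_nonneg 3]
  · have hQR : (4:ℝ) ≤ (Q:ℝ) := by exact_mod_cast h4
    have hs : Real.sqrt Q ≤ (Q:ℝ) / 2 := by
      nlinarith [Real.sq_sqrt (show (0:ℝ) ≤ (Q:ℝ) by positivity), Real.sqrt_nonneg (Q:ℝ),
        sq_nonneg (Real.sqrt (Q:ℝ) - (Q:ℝ)/2)]
    have hbase : 1 + Real.sqrt Q * ((Q:ℝ) - 1) ≤ ((Q:ℝ) - 1) ^ 2 := by
      nlinarith [hs, hQR]
    have h0 : (0:ℝ) ≤ 1 + Real.sqrt Q * ((Q:ℝ) - 1) := by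
      have : (0:ℝ) ≤ Real.sqrt Q * ((Q:ℝ) - 1) := by
        apply mul_nonneg (Real.sqrt_nonneg _); linarith
      linarith
    calc (1 + Real.sqrt Q * ((Q:ℝ) - 1)) ^ (Q - 1)
        ≤ (((Q:ℝ) - 1) ^ 2) ^ (Q - 1) := pow_le_pow_left₀ h0 hbase _
      _ ≤ 10 * (Q:ℝ) * ((((Q:ℝ) - 1) ^ 2) ^ (Q - 1)) := by
          apply le_mul_of_one_le_left (by positivity)
          linarith


/-! ### the main one-step clustering lemma -/

lemma step (hQ : 2 ≤ Q) {s : ℝ} (hs0 : 0 < s) (hs1 : s ≤ 1)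
    (q' : Fin Q → EuclideanSpace ℝ (Fin n)) :
    ∃ (q'' : Fin Q → EuclideanSpace ℝ (Fin n)) (ρ : ℝ),
      (¬ 2 ≤ (Finset.univ.image q').card → q'' = q' ∧ ρ = 0) ∧
      (2 ≤ (Finset.univ.image q').card →
        Set.range q'' ⊂ Set.range q' ∧
        (Finset.univ.image q'').card < (Finset.univ.image q').card ∧
        s / 4 * dmin q' < ρ ∧
        ρ ≤ (1 + 2 * (20 * (Q:ℝ) / s) * ((Q:ℝ) - 1) ^ 2) ^ (Q - 1) * (s / 4 * dmin q') ∧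
        Gdist q' q'' + s / 4 * dmin q' ≤ ρ ∧
        (2 ≤ (Finset.univ.image q'').card → 10 * (Q:ℝ) * ρ ≤ s / 4 * dmin q'')) := by
  by_cases hm : 2 ≤ (Finset.univ.image q').card
  case neg => exact ⟨q', 0, fun _ => ⟨rfl, rfl⟩, fun h => absurd h hm⟩
  case pos =>
  set c : ℝ := s / 4 with hc_def
  set d : ℝ := dmin q' with hd_def
  clear_value c d
  have hc : 0 < c := by rw [hc_def]; positivity
  have hc1 : c ≤ 1 / 4 := by rw [hc_def]; linarith
  have hd : 0 < d := by rw [hd_def]; exact dmin_pos hm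
  obtain ⟨i₀, j₀, hne₀, hnorm₀⟩ := dmin_pair hm
  rw [← hd_def] at hnorm₀
  set u : ℝ := Real.sqrt Q * ((Q:ℝ) - 1) with hu_def
  clear_value u
  have hQR : (2:ℝ) ≤ (Q:ℝ) := by exact_mod_cast hQ
  have hu1 : 1 ≤ u := by
    rw [hu_def]
    have h1 : 1 ≤ Real.sqrt Q := by
      rw [show (1:ℝ) = Real.sqrt 1 by simp]
      exact Real.sqrt_le_sqrt (by linarith)
    have h2 : 1 ≤ (Q:ℝ) - 1 := by linarith
    nlinarith
  set β : ℝ := 10 * Q * (1 + u) / c with hβ_def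
  clear_value β
  have hcβ : c * β = 10 * Q * (1 + u) := by
    rw [hβ_def]; field_simp
  have hβ1 : 1 ≤ β := by
    rw [hβ_def, le_div_iff₀ hc]
    nlinarith
  have hβ0 : 0 < β := by linarith
  set w : ℕ → ℝ := fun j => d * β ^ j with hw_def
  clear_value w
  have hw_eval : ∀ j, w j = d * β ^ j := fun j => by rw [hw_def]
  have hw_pos : ∀ j, 0 < w j := by
    intro j; rw [hw_eval]; exact mul_pos hd (pow_pos hβ0 j)
  have hw_mono : ∀ {j j' : ℕ}, j ≤ j' → w j ≤ w j' := by
    intro j j' h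
    rw [hw_eval, hw_eval]
    exact mul_le_mul_of_nonneg_left (pow_le_pow_right₀ hβ1 h) hd.le
  have hd_le_w : ∀ j, d ≤ w j := by
    intro j
    have h := hw_mono (Nat.zero_le j)
    have h0 : w 0 = d := by rw [hw_eval]; simp
    linarith
  have himp_mono : ∀ {t t' : ℝ}, t ≤ t' →
      ∀ i j : Fin Q, (graphAt q' t).Reachable i j → (graphAt q' t').Reachable i j :=
    fun h i j hr => reach_mono h hr
  have himp_neg : ∀ {t' : ℝ}, 0 ≤ t' → ∀ i j : Fin Q,
      (graphAt q' (-1)).Reachable i j → (graphAt q' t').Reachable i j := by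
    intro t' _ i j hr
    rw [reach_eq_of_neg (by norm_num) hr]
  have hvals_neg' : vals q' (-1) = Finset.univ.image q' := vals_neg q' (by norm_num)
  have hpair_reach : ∀ {t : ℝ}, d ≤ t → (graphAt q' t).Reachable i₀ j₀ := by
    intro t ht
    refine SimpleGraph.Adj.reachable ⟨fun h => hne₀ (by rw [h]), ?_⟩
    rw [hnorm₀]
    exact ht
  have hvals0_lt : ∀ {t : ℝ}, d ≤ t → (vals q' t).card < (Finset.univ.image q').card := by
    intro t ht
    rw [← hvals_neg']
    apply card_vals_lt (le_trans hd.le ht) (himp_neg (le_trans hd.le ht))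
    refine ⟨i₀, j₀, hpair_reach ht, ?_⟩
    rw [rep_neg q' (by norm_num : (-1:ℝ) < 0), rep_neg q' (by norm_num : (-1:ℝ) < 0)]
    exact hne₀
  have hmQ : (Finset.univ.image q').card ≤ Q := le_trans (Finset.card_image_le) (by simp)
  have hvals_ne : ∀ t : ℝ, 1 ≤ (vals q' t).card := by
    intro t
    have h : (vals q' t).Nonempty :=
      ⟨q' (rep q' t ⟨0, by omega⟩), mem_vals.2 ⟨_, rfl⟩⟩
    exact Finset.card_pos.2 h
  have hgoodex : ∃ j, j ≤ Q - 2 ∧ ((vals q' (w j)).card = 1 ∨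
      ∀ a b : Fin Q, (graphAt q' (w (j+1))).Reachable a b →
        (graphAt q' (w j)).Reachable a b) := by
    by_contra hcon
    push_neg at hcon
    have hdec : ∀ j, j ≤ Q - 2 → (vals q' (w (j+1))).card < (vals q' (w j)).card := by
      intro j hj
      obtain ⟨hne1, a, b, hrab, hnab⟩ := hcon j hj
      apply card_vals_lt (hw_pos (j+1)).le (himp_mono (hw_mono (Nat.le_succ j)))
      refine ⟨a, b, hrab, ?_⟩
      intro heq
      apply hnab
      have h1 : (graphAt q' (w j)).Reachable (rep q' (w j) a) (rep q' (w j) b) :=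
        reach_of_eq (hw_pos j).le heq
      exact ((reach_rep q' (w j) a).trans h1).trans (reach_rep q' (w j) b).symm
    have hchain : ∀ j, j ≤ Q - 1 → (vals q' (w j)).card + j ≤ (vals q' (w 0)).card := by
      intro j
      induction j with
      | zero => omega
      | succ k ih =>
        intro hk
        have h1 := hdec k (by omega)
        have h2 := ih (by omega)
        omega
    have h1 := hchain (Q-1) (le_refl _)
    have h2 := hvals0_lt (hd_le_w 0)
    have h3 := hvals_ne (w (Q-1))
    omega
  obtain ⟨j, hjle, hgood⟩ := hgoodex
  set t : ℝ := w j with ht_def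
  have ht0 : 0 < t := by rw [ht_def]; exact hw_pos j
  refine ⟨fun i => q' (rep q' t i), c * d + u * t, fun h => absurd hm h, fun _ => ?_⟩
  set q'' : Fin Q → EuclideanSpace ℝ (Fin n) := fun i => q' (rep q' t i) with hq''_def
  have him : Finset.univ.image q'' = vals q' t := by rw [hq''_def]; rfl
  have hq''i : ∀ i, q'' i = q' (rep q' t i) := fun i => by rw [hq''_def]
  clear_value q''
  have hcard_lt : (Finset.univ.image q'').card < (Finset.univ.image q').card := by
    rw [him, ht_def]; exact hvals0_lt (hd_le_w j)
  have hsub : Set.range q'' ⊆ Set.range q' := by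
    rintro x ⟨i, rfl⟩
    exact ⟨rep q' t i, (hq''i i).symm⟩
  have hrange : Set.range q'' ⊂ Set.range q' := by
    refine hsub.ssubset_of_ne ?_
    intro he
    have hco : (Finset.univ.image q'') = (Finset.univ.image q') := by
      apply Finset.coe_injective
      rw [Finset.coe_image, Finset.coe_image, Finset.coe_univ, Set.image_univ, Set.image_univ]
      exact he
    rw [hco] at hcard_lt
    exact lt_irrefl _ hcard_lt
  have hGd : Gdist q' q'' ≤ u * t := by
    have h1 : Gdist q' q'' ≤ Real.sqrt (∑ i, ‖q' i - q'' i‖ ^ 2) := by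
      simpa using gdist_le q' q'' (Equiv.refl _)
    have h2 : ∀ i : Fin Q, ‖q' i - q'' i‖ ^ 2 ≤ (((Q:ℝ) - 1) * t) ^ 2 := by
      intro i
      rw [hq''i i]
      have hb : ‖q' i - q' (rep q' t i)‖ ≤ ((Q:ℝ) - 1) * t :=
        reach_norm_le ht0.le (reach_rep q' t i)
      have hnn : (0:ℝ) ≤ ‖q' i - q' (rep q' t i)‖ := norm_nonneg _
      nlinarith [hb, hnn]
    have h3 : (∑ i, ‖q' i - q'' i‖ ^ 2) ≤ (Q:ℝ) * (((Q:ℝ) - 1) * t) ^ 2 := by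
      calc (∑ i, ‖q' i - q'' i‖ ^ 2) ≤ ∑ _i : Fin Q, (((Q:ℝ) - 1) * t) ^ 2 :=
            Finset.sum_le_sum (fun i _ => h2 i)
        _ = (Q:ℝ) * (((Q:ℝ) - 1) * t) ^ 2 := by
            rw [Finset.sum_const, Finset.card_univ, Fintype.card_fin, nsmul_eq_mul]
    have h4 : Real.sqrt (∑ i, ‖q' i - q'' i‖ ^ 2)
        ≤ Real.sqrt ((Q:ℝ) * (((Q:ℝ)-1) * t) ^ 2) := Real.sqrt_le_sqrt h3
    have h5 : Real.sqrt ((Q:ℝ) * (((Q:ℝ)-1) * t) ^ 2) = u * t := by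
      rw [Real.sqrt_mul (by positivity),
        Real.sqrt_sq (mul_nonneg (by linarith) ht0.le)]
      rw [hu_def]; ring
    calc Gdist q' q'' ≤ _ := h1
      _ ≤ _ := h4
      _ = u * t := h5
  set A : ℝ := 1 + 2 * (20 * (Q:ℝ) / s) * ((Q:ℝ) - 1) ^ 2 with hA_def
  clear_value A
  have hA1 : 1 ≤ A := by
    have h : 0 ≤ 2 * (20 * (Q:ℝ) / s) * ((Q:ℝ) - 1) ^ 2 := by positivity
    rw [hA_def]; linarith
  have hQ1pos : (0:ℝ) < ((Q:ℝ) - 1) ^ 2 := pow_pos (by linarith) 2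
  have hβA : β * ((Q:ℝ)-1)^2 ≤ A * (1 + u) := by
    have hcA : c * (A - 1) = 10 * (Q:ℝ) * ((Q:ℝ)-1)^2 := by
      rw [hA_def, hc_def]
      field_simp
      ring
    have e1 : c * (β * ((Q:ℝ)-1)^2) = c * ((A - 1) * (1 + u)) := by
      linear_combination ((Q:ℝ)-1)^2 * hcβ - (1+u) * hcA
    have e2 : β * ((Q:ℝ)-1)^2 = (A - 1) * (1 + u) := mul_left_cancel₀ hc.ne' e1
    rw [e2]
    exact mul_le_mul_of_nonneg_right (by linarith) (by linarith)
  have hst4 : β ^ (Q-1) ≤ 10 * (Q:ℝ) * A ^ (Q-1) := by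
    have p1 : (β * ((Q:ℝ)-1)^2) ^ (Q-1) ≤ (A * (1+u)) ^ (Q-1) :=
      pow_le_pow_left₀ (mul_nonneg hβ0.le hQ1pos.le) hβA _
    rw [mul_pow, mul_pow] at p1
    have p2 : A ^ (Q-1) * (1+u) ^ (Q-1)
        ≤ A ^ (Q-1) * (10 * (Q:ℝ) * ((((Q:ℝ)-1)^2) ^ (Q-1))) := by
      apply mul_le_mul_of_nonneg_left _ (pow_nonneg (by linarith) _)
      rw [hu_def]
      exact s5lemma hQ
    have p3 : β ^ (Q-1) * (((Q:ℝ)-1)^2) ^ (Q-1)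
        ≤ (10 * (Q:ℝ) * A ^ (Q-1)) * (((Q:ℝ)-1)^2) ^ (Q-1) := by
      calc β ^ (Q-1) * (((Q:ℝ)-1)^2) ^ (Q-1) ≤ A ^ (Q-1) * (1+u) ^ (Q-1) := p1
        _ ≤ A ^ (Q-1) * (10 * (Q:ℝ) * ((((Q:ℝ)-1)^2) ^ (Q-1))) := p2
        _ = (10 * (Q:ℝ) * A ^ (Q-1)) * (((Q:ℝ)-1)^2) ^ (Q-1) := by ring
    exact le_of_mul_le_mul_right p3 (pow_pos hQ1pos _)
  have h10Q : (0:ℝ) < 10 * Q := by positivity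
  have hkey : c + u * β ^ j ≤ A ^ (Q - 1) * c := by
    have hβj1 : 1 ≤ β ^ j := one_le_pow₀ hβ1
    have st1 : 10 * (Q:ℝ) * (c + u * β ^ j) ≤ 10 * (Q:ℝ) * ((1 + u) * β ^ j) := by
      have hh : (0:ℝ) ≤ 10 * Q * (β ^ j - c) := mul_nonneg h10Q.le (by linarith)
      linarith [hh]
    have st2 : 10 * (Q:ℝ) * ((1 + u) * β ^ j) = c * β ^ (j+1) := by
      rw [pow_succ]
      linear_combination (-(β ^ j)) * hcβ
    have st3 : c * β ^ (j+1) ≤ c * β ^ (Q-1) :=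
      mul_le_mul_of_nonneg_left (pow_le_pow_right₀ hβ1 (by omega)) hc.le
    have st5 : c * β ^ (Q-1) ≤ c * (10 * Q * A ^ (Q-1)) :=
      mul_le_mul_of_nonneg_left hst4 hc.le
    have hfin : 10 * (Q:ℝ) * (c + u * β ^ j) ≤ 10 * (Q:ℝ) * (A ^ (Q-1) * c) := by
      calc 10 * (Q:ℝ) * (c + u * β ^ j) ≤ 10 * (Q:ℝ) * ((1 + u) * β ^ j) := st1
        _ = c * β ^ (j+1) := st2
        _ ≤ c * β ^ (Q-1) := st3
        _ ≤ c * (10 * Q * A ^ (Q-1)) := st5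
        _ = 10 * (Q:ℝ) * (A ^ (Q-1) * c) := by ring
    exact le_of_mul_le_mul_left hfin h10Q
  have hupper : c * d + u * t ≤ A ^ (Q - 1) * (c * d) := by
    have h := mul_le_mul_of_nonneg_right hkey hd.le
    have e : (c + u * β ^ j) * d = c * d + u * t := by
      rw [ht_def, hw_eval]; ring
    have e2 : A ^ (Q-1) * c * d = A ^ (Q-1) * (c * d) := by ring
    rw [e, e2] at h
    exact h
  have hρgt : c * d < c * d + u * t := by
    have hut : 0 < u * t := mul_pos (by linarith) ht0
    linarith
  have hcont : 2 ≤ (Finset.univ.image q'').card →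
      10 * (Q:ℝ) * (c * d + u * t) ≤ c * dmin q'' := by
    intro h2
    rcases hgood with h1 | hst
    · rw [him, ht_def] at h2
      rw [ht_def] at h1
      omega
    · have hdd : w (j+1) ≤ dmin q'' := by
        apply le_dmin (dminSet_nonempty h2)
        intro a b hab
        by_contra hlt
        push_neg at hlt
        rw [hq''i a, hq''i b] at hlt hab
        have hrepne : rep q' t a ≠ rep q' t b := fun h => hab (congrArg q' h)
        have hadj : (graphAt q' (w (j+1))).Adj (rep q' t a) (rep q' t b) :=
          ⟨hrepne, hlt.le⟩
        have hmono' : t ≤ w (j+1) := by rw [ht_def]; exact hw_mono (Nat.le_succ j)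
        have hr : (graphAt q' (w (j+1))).Reachable a b :=
          ((reach_mono hmono' (reach_rep q' t a)).trans hadj.reachable).trans
            (reach_mono hmono' (reach_rep q' t b)).symm
        have hrt : (graphAt q' t).Reachable a b := by
          rw [ht_def]; exact hst a b hr
        exact hab (congrArg q' (rep_eq_of_reach hrt))
      have e : c * w (j+1) = 10 * Q * (1 + u) * t := by
        rw [hw_eval, ht_def, hw_eval, pow_succ]
        linear_combination d * β ^ j * hcβ
      have hcdt : c * d ≤ t := by
        have h1 := hd_le_w j
        rw [← ht_def] at h1
        have hh : (0:ℝ) ≤ (1 - c) * d := mul_nonneg (by linarith) hd.le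
        linarith [hh, h1]
      calc 10 * (Q:ℝ) * (c * d + u * t) ≤ 10 * Q * ((1 + u) * t) := by
            have hh : (0:ℝ) ≤ 10 * Q * (t - c * d) := mul_nonneg h10Q.le (by linarith)
            linarith [hh]
        _ = c * w (j+1) := by rw [e]; ring
        _ ≤ c * dmin q'' := mul_le_mul_of_nonneg_left hdd hc.le
  exact ⟨hrange, hcard_lt, hρgt, hupper, by linarith [hGd], hcont⟩

end Stmt11

/-- Existence of nested admissible closed balls: there is a constant `θ₀ = θ₀(n,Q) ∈ (0, π/4]`
such that for every `q ∈ Q_Q(ℝⁿ)` with at least two distinct support points there exist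
`1 ≤ L ≤ Q−1`, members `q^{(0)} = q, q^{(1)}, …, q^{(L)}` and radii
`0 = ρ₀ < σ₀ < ρ₁ < σ₁ < ⋯ < ρ_L` with: strictly decreasing supports ending in a singleton;
`σ_k = (sin θ₀/4)·min` mutual distance of support points of `q^{(k)}` and `10Q·ρ_k ≤ σ_k`
for `k < L`; `σ_{k−1} < ρ_k ≤ C₀(n,Q)·σ_{k−1}` with
`C₀ = (1 + 2K(Q−1)²)^{Q−1}`, `K = 20Q/sin θ₀`; the nesting
`B^Q_{σ_{k−1}}(q^{(k−1)}) ⊆ B^Q_{ρ_k}(q^{(k)})`; and `G(q^{(0)}, q^{(k)}) < (Q−1)·ρ_k`. -/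
theorem stmt_11 (n Q : ℕ) (hQ : 2 ≤ Q) :
    ∃ θ₀ : ℝ, 0 < θ₀ ∧ θ₀ ≤ Real.pi / 4 ∧
    ∀ q : Fin Q → EuclideanSpace ℝ (Fin n),
      2 ≤ (Finset.univ.image q).card →
      ∃ (L : ℕ) (qs : ℕ → Fin Q → EuclideanSpace ℝ (Fin n)) (ρ σv : ℕ → ℝ),
        1 ≤ L ∧ L ≤ Q - 1 ∧ qs 0 = q ∧ ρ 0 = 0 ∧
        (∀ k, 1 ≤ k → k ≤ L → Set.range (qs k) ⊂ Set.range (qs (k - 1))) ∧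
        (Finset.univ.image (qs L)).card = 1 ∧
        (∀ k, k < L → σv k = Real.sin θ₀ / 4 *
          sInf {d : ℝ | ∃ x ∈ Set.range (qs k), ∃ y ∈ Set.range (qs k),
            x ≠ y ∧ d = ‖x - y‖}) ∧
        (∀ k, k < L → 10 * (Q : ℝ) * ρ k ≤ σv k) ∧
        (∀ k, k < L → ρ k < σv k ∧ σv k < ρ (k + 1)) ∧
        (∀ k, 1 ≤ k → k ≤ L →
          ρ k ≤ (1 + 2 * (20 * (Q : ℝ) / Real.sin θ₀) * ((Q : ℝ) - 1) ^ 2) ^ (Q - 1)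
            * σv (k - 1)) ∧
        (∀ k, 1 ≤ k → k ≤ L → ∀ p : Fin Q → EuclideanSpace ℝ (Fin n),
          Gdist p (qs (k - 1)) ≤ σv (k - 1) → Gdist p (qs k) ≤ ρ k) ∧
        (∀ k, 1 ≤ k → k ≤ L → Gdist (qs 0) (qs k) < ((Q : ℝ) - 1) * ρ k) := by
  have hpi : 0 < Real.pi := Real.pi_pos
  refine ⟨Real.pi / 4, by positivity, le_refl _, ?_⟩
  intro q hq
  set s : ℝ := Real.sin (Real.pi / 4) with hs_def
  have hs0 : 0 < s := by
    rw [hs_def]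
    exact Real.sin_pos_of_pos_of_lt_pi (by positivity) (by linarith)
  have hs1 : s ≤ 1 := by rw [hs_def]; exact Real.sin_le_one _
  have hQR : (2:ℝ) ≤ (Q:ℝ) := by exact_mod_cast hQ
  choose F R hF using fun q' => Stmt11.step (n := n) hQ hs0 hs1 q'
  set T : ℕ → (Fin Q → EuclideanSpace ℝ (Fin n)) × ℝ := fun k =>
    Nat.rec (q, (0:ℝ)) (fun _ prev => (F prev.1, R prev.1)) k with hT_def
  set qs : ℕ → Fin Q → EuclideanSpace ℝ (Fin n) := fun k => (T k).1 with hqs_def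
  set ρ : ℕ → ℝ := fun k => (T k).2 with hρ_def
  have hqs0 : qs 0 = q := rfl
  have hρ0 : ρ 0 = 0 := rfl
  have hqs_succ : ∀ k, qs (k+1) = F (qs k) := fun k => rfl
  have hρ_succ : ∀ k, ρ (k+1) = R (qs k) := fun k => rfl
  clear_value qs ρ
  have hcard1 : ∀ k, 1 ≤ (Finset.univ.image (qs k)).card := by
    intro k
    refine Finset.card_pos.2 ⟨qs k ⟨0, by omega⟩, Finset.mem_image.2 ⟨_, Finset.mem_univ _, rfl⟩⟩
  have hdichot : ∀ k, (Finset.univ.image (qs k)).card ≤ 1 ∨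
      (Finset.univ.image (qs k)).card + k ≤ (Finset.univ.image q).card := by
    intro k
    induction k with
    | zero => right; rw [hqs0]; omega
    | succ k ih =>
      by_cases h2 : 2 ≤ (Finset.univ.image (qs k)).card
      · have hlt := ((hF (qs k)).2 h2).2.1
        rw [← hqs_succ k] at hlt
        rcases ih with h | h
        · omega
        · right; omega
      · left
        have he := ((hF (qs k)).1 h2).1
        rw [hqs_succ k, he]
        omega
  have hex : ∃ k, (Finset.univ.image (qs k)).card ≤ 1 := by
    rcases hdichot ((Finset.univ.image q).card) with h | h
    · exact ⟨_, h⟩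
    · have := hcard1 ((Finset.univ.image q).card)
      exact ⟨(Finset.univ.image q).card, by omega⟩
  set L := Nat.find hex with hL_def
  have hLspec : (Finset.univ.image (qs L)).card ≤ 1 := Nat.find_spec hex
  have hLmin : ∀ k, k < L → 2 ≤ (Finset.univ.image (qs k)).card := by
    intro k hk
    have := Nat.find_min hex hk
    omega
  have hL1 : 1 ≤ L := by
    rcases Nat.eq_zero_or_pos L with h | h
    · rw [h, hqs0] at hLspec; omega
    · exact h
  have hstep := fun k (hk : k < L) => (hF (qs k)).2 (hLmin k hk)
  have hchain : ∀ k, k ≤ L → (Finset.univ.image (qs k)).card + k ≤ (Finset.univ.image q).card := by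
    intro k
    induction k with
    | zero => intro _; rw [hqs0]; omega
    | succ k ih =>
      intro hk
      have hlt := (hstep k (by omega)).2.1
      rw [← hqs_succ k] at hlt
      have := ih (by omega)
      omega
  have hmQ : (Finset.univ.image q).card ≤ Q := le_trans Finset.card_image_le (by simp)
  have hLQ : L ≤ Q - 1 := by
    have h1 := hchain L (le_refl L)
    have h2 := hcard1 L
    omega
  have hdminpos : ∀ k, k < L → 0 < Stmt11.dmin (qs k) :=
    fun k hk => Stmt11.dmin_pos (hLmin k hk)
  have hb8 : ∀ k, k < L → 10 * (Q:ℝ) * ρ k ≤ s / 4 * Stmt11.dmin (qs k) := by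
    intro k hk
    cases k with
    | zero =>
      have h1 : 0 < s / 4 * Stmt11.dmin (qs 0) := mul_pos (by linarith) (hdminpos 0 hk)
      simp only [hρ0, mul_zero]
      exact h1.le
    | succ k' =>
      have h := (hstep k' (by omega)).2.2.2.2.2
      rw [← hqs_succ k', ← hρ_succ k'] at h
      exact h (hLmin (k'+1) hk)
  have hρpos : ∀ k, k < L → 0 < ρ (k+1) := by
    intro k hk
    have h3 := (hstep k hk).2.2.1
    rw [← hρ_succ k] at h3
    have := mul_pos (show (0:ℝ) < s/4 by linarith) (hdminpos k hk)
    linarith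
  have hb9 : ∀ k, k < L → ρ k < s / 4 * Stmt11.dmin (qs k) ∧
      s / 4 * Stmt11.dmin (qs k) < ρ (k+1) := by
    intro k hk
    constructor
    · cases k with
      | zero =>
        simp only [hρ0]
        exact mul_pos (by linarith) (hdminpos 0 hk)
      | succ k' =>
        have h8 := hb8 (k'+1) hk
        have hp := hρpos k' (by omega)
        have hh : 0 < (10 * (Q:ℝ) - 1) * ρ (k'+1) := mul_pos (by linarith) hp
        linarith
    · have h3 := (hstep k hk).2.2.1
      rw [← hρ_succ k] at h3
      exact h3
  have haux : ∀ k, 1 ≤ k → k ≤ L → Gdist (qs 0) (qs k) < ρ k := by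
    intro k
    induction k with
    | zero => omega
    | succ k' ih =>
      intro _ hkL
      have h5 := (hstep k' (by omega)).2.2.2.2.1
      rw [← hqs_succ k', ← hρ_succ k'] at h5
      rcases Nat.eq_zero_or_pos k' with h0 | h0
      · subst h0
        have := mul_pos (show (0:ℝ) < s/4 by linarith) (hdminpos 0 (by omega))
        linarith
      · have hih := ih h0 (by omega)
        have h9 := (hb9 k' (by omega)).1
        have htri := Stmt11.gdist_triangle (qs 0) (qs k') (qs (k'+1))
        linarith
  refine ⟨L, qs, ρ, fun k => s / 4 * Stmt11.dmin (qs k), hL1, hLQ, hqs0, hρ0, ?_, ?_,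
    fun k _ => rfl, hb8, hb9, ?_, ?_, ?_⟩
  · -- ranges strictly decreasing
    intro k hk1 hkL
    cases k with
    | zero => omega
    | succ k' =>
      have h := (hstep k' (by omega)).1
      rw [← hqs_succ k'] at h
      simpa using h
  · exact le_antisymm hLspec (hcard1 L)
  · -- upper bound on ρ
    intro k hk1 hkL
    cases k with
    | zero => omega
    | succ k' =>
      have h := (hstep k' (by omega)).2.2.2.1
      rw [← hρ_succ k'] at h
      simpa using h
  · -- nesting
    intro k hk1 hkL p hp
    cases k with
    | zero => omega
    | succ k' =>
      try simp only [Nat.add_sub_cancel] at hp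
      have h5 := (hstep k' (by omega)).2.2.2.2.1
      rw [← hqs_succ k', ← hρ_succ k'] at h5
      have htri := Stmt11.gdist_triangle p (qs k') (qs (k'+1))
      try simp only [Nat.add_sub_cancel]
      linarith
  · -- distance to the original
    intro k hk1 hkL
    have h1 := haux k hk1 hkL
    have h2 : 0 < ρ k := lt_of_le_of_lt (Stmt11.gdist_nonneg _ _) h1
    have hh : 0 ≤ ((Q:ℝ) - 2) * ρ k := mul_nonneg (by linarith) h2.le
    linarith
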